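/- Fix an integer d ≥ 1 and c > 0. There exist p₀ > 0 and a constant K (both depending only on c and d) such that the following holds for all integers n ≥ k ≥ 2d with k/n ≤ p₀. Let F be a d-uniform hypergraph on [n], and for each hyperedge A ∈ F let Y_A ⊆ X_A := {S ∈ binom([n],k) : S ⊇ A} satisfy |Y_A| ≥ c·|X_A|. Then Pr_{S∼ν_{n,k}}[ S ∈ ⋃_{A∈F} X_A ] ≤ K · Pr_{S∼ν_{n,k}}[ S ∈ ⋃_{A∈F} Y_A ]. -/

import Mathlib

open Finset

def ksets (n k : ℕ) : Finset (Finset (Fin n)) := Finset.univ.powersetCard k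

lemma card_filter_superset (n k : ℕ) (T : Finset (Fin n)) (hT : T.card ≤ k) :
    ((ksets n k).filter (fun S => T ⊆ S)).card = (n - T.card).choose (k - T.card) := by
  classical
  have h1 : ((ksets n k).filter (fun S => T ⊆ S)).card
      = ((Finset.univ \ T).powersetCard (k - T.card)).card := by
    apply Finset.card_bij' (fun S _ => S \ T) (fun R _ => R ∪ T)
    · intro S hS
      simp only [ksets, Finset.mem_filter, Finset.mem_powersetCard] at hS
      obtain ⟨⟨_, hcard⟩, hTS⟩ := hS
      rw [Finset.mem_powersetCard]
      constructor
      · intro x hx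
        simp only [Finset.mem_sdiff] at hx ⊢
        exact ⟨Finset.mem_univ x, hx.2⟩
      · rw [Finset.card_sdiff_of_subset hTS, hcard]
    · intro R hR
      rw [Finset.mem_powersetCard] at hR
      obtain ⟨hRsub, hRcard⟩ := hR
      have hdisj : Disjoint R T := by
        refine Finset.disjoint_left.mpr ?_
        intro x hx
        have := hRsub hx
        simp only [Finset.mem_sdiff] at this
        exact this.2
      simp only [ksets, Finset.mem_filter, Finset.mem_powersetCard]
      refine ⟨⟨Finset.subset_univ _, ?_⟩, Finset.subset_union_right⟩
      rw [Finset.card_union_of_disjoint hdisj, hRcard]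
      omega
    · intro S hS
      simp only [ksets, Finset.mem_filter] at hS
      exact Finset.sdiff_union_of_subset hS.2
    · intro R hR
      rw [Finset.mem_powersetCard] at hR
      have hdisj : Disjoint R T := by
        refine Finset.disjoint_left.mpr ?_
        intro x hx
        have := hR.1 hx
        simp only [Finset.mem_sdiff] at this
        exact this.2
      exact Finset.union_sdiff_cancel_right hdisj
  rw [h1, Finset.card_powersetCard]
  congr 1
  have : (Finset.univ \ T).card = n - T.card := by
    rw [Finset.card_sdiff_of_subset (Finset.subset_univ _), Finset.card_univ, Fintype.card_fin]
  rw [this]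

section Lists

variable {α β : Type*} [DecidableEq β]

def lUnion (Y : α → Finset β) : List α → Finset β
  | [] => ∅
  | a :: l => Y a ∪ lUnion Y l

def pairSum (w : α → α → ℝ) : List α → ℝ
  | [] => 0
  | a :: l => (l.map (w a)).sum + pairSum w l

lemma mem_lUnion {Y : α → Finset β} {l : List α} {b : β} :
    b ∈ lUnion Y l ↔ ∃ a ∈ l, b ∈ Y a := by
  induction l with
  | nil => simp [lUnion]
  | cons a l ih => simp [lUnion, ih]

lemma card_lUnion_le (Y : α → Finset β) (l : List α) :
    (lUnion Y l).card ≤ (l.map (fun a => (Y a).card)).sum := by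
  induction l with
  | nil => simp [lUnion]
  | cons a l ih =>
    simp only [lUnion, List.map_cons, List.sum_cons]
    calc (Y a ∪ lUnion Y l).card ≤ (Y a).card + (lUnion Y l).card := Finset.card_union_le _ _
    _ ≤ _ := by omega

lemma bonferroni {Y : α → Finset β} {w : α → α → ℝ}
    (hw : ∀ a b, ((Y a ∩ Y b).card : ℝ) ≤ w a b) (l : List α) :
    (l.map (fun a => ((Y a).card : ℝ))).sum - pairSum w l ≤ ((lUnion Y l).card : ℝ) := by
  induction l with
  | nil => simp [lUnion, pairSum]
  | cons a l ih =>
    simp only [lUnion, pairSum, List.map_cons, List.sum_cons]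
    have hcard : ((Y a).card : ℝ) + ((lUnion Y l).card : ℝ) - ((Y a ∩ lUnion Y l).card : ℝ)
        ≤ ((Y a ∪ lUnion Y l).card : ℝ) := by
      have h := Finset.card_union_add_card_inter (Y a) (lUnion Y l)
      have h2 : ((Y a ∪ lUnion Y l).card : ℝ) + ((Y a ∩ lUnion Y l).card : ℝ)
          = ((Y a).card : ℝ) + ((lUnion Y l).card : ℝ) := by exact_mod_cast congrArg (Nat.cast : ℕ → ℝ) h
      linarith
    have hinter : ∀ m : List α, ((Y a ∩ lUnion Y m).card : ℝ) ≤ (m.map (w a)).sum := by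
      intro m
      induction m with
      | nil => simp [lUnion]
      | cons b m ihm =>
        simp only [lUnion, List.map_cons, List.sum_cons]
        rw [Finset.inter_union_distrib_left]
        calc ((Y a ∩ Y b ∪ Y a ∩ lUnion Y m).card : ℝ)
            ≤ ((Y a ∩ Y b).card : ℝ) + ((Y a ∩ lUnion Y m).card : ℝ) := by
              exact_mod_cast Finset.card_union_le _ _
          _ ≤ w a b + (m.map (w a)).sum := by
              have := hw a b
              linarith
    have := hinter l
    linarith

def GoodL (w : α → α → ℝ) (θ : ℝ) : List α → Prop
  | [] => True
  | a :: l => (l.map (w a)).sum ≤ θ ∧ GoodL w θ l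

lemma pairSum_nonneg {w : α → α → ℝ} (hw0 : ∀ a b, 0 ≤ w a b) (l : List α) :
    0 ≤ pairSum w l := by
  induction l with
  | nil => simp [pairSum]
  | cons a l ih =>
    simp only [pairSum]
    have : 0 ≤ (l.map (w a)).sum := by
      apply List.sum_nonneg
      intro x hx
      obtain ⟨b, _, rfl⟩ := List.mem_map.mp hx
      exact hw0 a b
    linarith

lemma good_pairSum_le {w : α → α → ℝ} (hw0 : ∀ a b, 0 ≤ w a b) {θ : ℝ} (hθ : 0 ≤ θ) :
    ∀ {l l' : List α}, GoodL w θ l → l'.Sublist l → pairSum w l' ≤ θ * l'.length := by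
  intro l
  induction l with
  | nil =>
    intro l' _ hsub
    rw [List.sublist_nil.mp hsub]
    simp [pairSum]
  | cons a l ih =>
    intro l' hgood hsub
    obtain ⟨hga, hgl⟩ := hgood
    rcases List.sublist_cons_iff.mp hsub with h | ⟨r, rfl, hr⟩
    · exact ih hgl h
    · simp only [pairSum, List.length_cons]
      have h1 : (r.map (w a)).sum ≤ (l.map (w a)).sum :=
        List.Sublist.sum_le_sum (List.Sublist.map (w a) hr) (by
          intro x hx
          obtain ⟨b, _, rfl⟩ := List.mem_map.mp hx
          exact hw0 a b)
      have h2 := ih hgl hr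
      push_cast
      nlinarith [pairSum_nonneg hw0 r]

noncomputable def greedy (w : α → α → ℝ) (θ : ℝ) : List α → List α
  | [] => []
  | a :: l =>
    if (((greedy w θ l).map (w a)).sum ≤ θ) then a :: greedy w θ l else greedy w θ l

lemma greedy_sublist (w : α → α → ℝ) (θ : ℝ) (l : List α) : (greedy w θ l).Sublist l := by
  induction l with
  | nil => simp [greedy]
  | cons a l ih =>
    simp only [greedy]
    split
    · exact ih.cons₂ a
    · exact ih.cons a

lemma greedy_good (w : α → α → ℝ) (θ : ℝ) (l : List α) : GoodL w θ (greedy w θ l) := by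
  induction l with
  | nil => simp [greedy, GoodL]
  | cons a l ih =>
    simp only [greedy]
    split
    · exact ⟨by assumption, ih⟩
    · exact ih

lemma greedy_reject {w : α → α → ℝ} (hw0 : ∀ a b, 0 ≤ w a b) (θ : ℝ) (l : List α) :
    ∀ a ∈ l, a ∉ greedy w θ l → θ < ((greedy w θ l).map (w a)).sum := by
  induction l with
  | nil => simp
  | cons b l ih =>
    intro a ha hna
    simp only [greedy] at hna ⊢
    rcases List.mem_cons.mp ha with rfl | ha'
    · by_cases h : ((greedy w θ l).map (w a)).sum ≤ θ
      · rw [if_pos h] at hna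
        exact absurd (List.mem_cons_self (a := a)) hna
      · rw [if_neg h] at hna ⊢
        exact lt_of_not_ge h
    · by_cases h : ((greedy w θ l).map (w b)).sum ≤ θ
      · rw [if_pos h] at hna ⊢
        have hna' : a ∉ greedy w θ l := fun hh => hna (List.mem_cons_of_mem b hh)
        have h1 := ih a ha' hna'
        simp only [List.map_cons, List.sum_cons]
        have h2 := hw0 a b
        linarith
      · rw [if_neg h] at hna ⊢
        exact ih a ha' hna
end Lists
open Finset

section Helpers
variable {α : Type*}

lemma mul_length_le_sum (l : List α) (f : α → ℝ) (m : ℝ) (h : ∀ a ∈ l, m ≤ f a) :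
    m * l.length ≤ (l.map f).sum := by
  induction l with
  | nil => simp
  | cons a l ih =>
    simp only [List.map_cons, List.sum_cons, List.length_cons]
    have h1 := h a (List.mem_cons_self (a := a) (l := l))
    have h2 := ih (fun b hb => h b (List.mem_cons_of_mem a hb))
    push_cast
    linarith

lemma sum_le_mul_length (l : List α) (f : α → ℝ) (m : ℝ) (h : ∀ a ∈ l, f a ≤ m) :
    (l.map f).sum ≤ m * l.length := by
  induction l with
  | nil => simp
  | cons a l ih =>
    simp only [List.map_cons, List.sum_cons, List.length_cons]
    have h1 := h a (List.mem_cons_self (a := a) (l := l))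
    have h2 := ih (fun b hb => h b (List.mem_cons_of_mem a hb))
    push_cast
    linarith

end Helpers

set_option maxHeartbeats 2000000 in
theorem pruning : ∀ d : ℕ, ∀ c : ℝ, 0 < c →
    ∃ p₀ K : ℝ, 0 < p₀ ∧ 0 ≤ K ∧
      ∀ n k : ℕ, 2 * d ≤ k → k ≤ n → (k : ℝ) / (n : ℝ) ≤ p₀ →
        ∀ F : Finset (Finset (Fin n)), (∀ A ∈ F, A.card = d) →
          ∀ Y : Finset (Fin n) → Finset (Finset (Fin n)),
            (∀ A ∈ F, Y A ⊆ (ksets n k).filter (fun S => A ⊆ S)) →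
            (∀ A ∈ F, c * (((ksets n k).filter (fun S => A ⊆ S)).card : ℝ) ≤ ((Y A).card : ℝ)) →
            (((ksets n k).filter (fun S => ∃ A ∈ F, A ⊆ S)).card : ℝ) ≤
              K * (((ksets n k).filter (fun S => ∃ A ∈ F, S ∈ Y A)).card : ℝ) := by
  intro d
  induction d using Nat.strong_induction_on with
  | _ d IH =>
  intro c hc
  rcases Nat.eq_zero_or_pos d with rfl | hd0
  · -- base case d = 0
    refine ⟨1, 1/c, one_pos, by positivity, ?_⟩
    intro n k _ hkn _ F hF Y hYsub hYdense
    classical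
    rcases F.eq_empty_or_nonempty with rfl | ⟨A, hA⟩
    · simp only [Finset.notMem_empty, false_and, exists_false, Finset.filter_false,
        Finset.card_empty, Nat.cast_zero]
      positivity
    · have hAe : A = ∅ := Finset.card_eq_zero.mp (hF A hA)
      subst hAe
      have h1 : ((ksets n k).filter (fun S => ∃ A ∈ F, A ⊆ S)) ⊆ ksets n k :=
        Finset.filter_subset _ _
      have h2 : (ksets n k).filter (fun S => (∅ : Finset (Fin n)) ⊆ S) = ksets n k := by
        apply Finset.filter_true_of_mem
        intro S _
        exact Finset.empty_subset S
      have h3 : Y ∅ ⊆ (ksets n k).filter (fun S => ∃ A ∈ F, S ∈ Y A) := by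
        intro S hS
        have := hYsub ∅ hA hS
        rw [Finset.mem_filter] at this ⊢
        exact ⟨this.1, ∅, hA, hS⟩
      have hd := hYdense ∅ hA
      rw [h2] at hd
      have hcard1 : (((ksets n k).filter (fun S => ∃ A ∈ F, A ⊆ S)).card : ℝ)
          ≤ ((ksets n k).card : ℝ) := by exact_mod_cast Finset.card_le_card h1
      have hcard2 : ((Y ∅).card : ℝ)
          ≤ (((ksets n k).filter (fun S => ∃ A ∈ F, S ∈ Y A)).card : ℝ) := by
        exact_mod_cast Finset.card_le_card h3
      rw [div_mul_eq_mul_div, le_div_iff₀ hc, one_mul]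
      calc (((ksets n k).filter (fun S => ∃ A ∈ F, A ⊆ S)).card : ℝ) * c
          = c * (((ksets n k).filter (fun S => ∃ A ∈ F, A ⊆ S)).card : ℝ) := by ring
        _ ≤ c * ((ksets n k).card : ℝ) := by nlinarith
        _ ≤ ((Y ∅).card : ℝ) := hd
        _ ≤ _ := hcard2
  · -- inductive step, d ≥ 1
    classical
    have hd1 : (1:ℝ) ≤ d := by exact_mod_cast hd0
    set cstar : ℝ := c^2 / (16 * d * 8^d) with hcstar_def
    have hcstar : 0 < cstar := by positivity
    have IH' : ∀ t, t < d → ∃ p0 K : ℝ, 0 < p0 ∧ 0 ≤ K ∧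
        ∀ n k : ℕ, 2 * t ≤ k → k ≤ n → (k : ℝ) / (n : ℝ) ≤ p0 →
          ∀ F : Finset (Finset (Fin n)), (∀ A ∈ F, A.card = t) →
            ∀ Y : Finset (Fin n) → Finset (Finset (Fin n)),
              (∀ A ∈ F, Y A ⊆ (ksets n k).filter (fun S => A ⊆ S)) →
              (∀ A ∈ F, cstar * (((ksets n k).filter (fun S => A ⊆ S)).card : ℝ) ≤ ((Y A).card : ℝ)) →
              (((ksets n k).filter (fun S => ∃ A ∈ F, A ⊆ S)).card : ℝ) ≤
                K * (((ksets n k).filter (fun S => ∃ A ∈ F, S ∈ Y A)).card : ℝ) := by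
      intro t ht
      obtain ⟨p0, K, h1, h2, h3⟩ := IH t ht cstar hcstar
      exact ⟨p0, K, h1, h2, h3⟩
    choose pf Kf hpf hKf hmf using IH'
    have hne : (Finset.range d).Nonempty := ⟨0, Finset.mem_range.mpr hd0⟩
    set ptot : ℕ → ℝ := fun t => if h : t < d then pf t h else 1 with hptot_def
    set Ktot : ℕ → ℝ := fun t => if h : t < d then Kf t h else 0 with hKtot_def
    have hptotpos : ∀ t, 0 < ptot t := by
      intro t
      simp only [hptot_def]
      split
      · apply hpf
      · exact one_pos
    set p₀ : ℝ := min (1/4) (((Finset.range d).image ptot).min' (hne.image ptot)) with hp₀_def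
    have hp₀pos : 0 < p₀ := by
      apply lt_min (by norm_num)
      obtain ⟨t, _, hmem⟩ := Finset.mem_image.mp (Finset.min'_mem _ (hne.image ptot))
      rw [← hmem]
      exact hptotpos t
    set K : ℝ := 4/(3*c) + ∑ t ∈ Finset.range d, Ktot t with hK_def
    have hKnn : 0 ≤ K := by
      apply add_nonneg (by positivity)
      apply Finset.sum_nonneg
      intro t _
      simp only [hKtot_def]
      split
      · apply hKf
      · exact le_rfl
    refine ⟨p₀, K, hp₀pos, hKnn, ?_⟩
    intro n k hk2d hkn hpp F hF Y hYsub hYdense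
    -- basic facts
    have hk0 : 0 < k := by omega
    have hn0 : 0 < n := by omega
    set p : ℝ := (k : ℝ) / (n : ℝ) with hp_def
    have hppos : 0 < p := div_pos (by exact_mod_cast hk0) (by exact_mod_cast hn0)
    have hp14 : p ≤ 1/4 := le_trans hpp (le_trans (min_le_left _ _) le_rfl)
    have hnR : (0:ℝ) < n := by exact_mod_cast hn0
    have hkR : (0:ℝ) < k := by exact_mod_cast hk0
    have h4k : 4 * (k:ℝ) ≤ (n:ℝ) := by
      rw [hp_def, div_le_iff₀ hnR] at hp14
      linarith
    have hkp : (k:ℝ) = p * n := by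
      rw [hp_def]; field_simp
    set Nc : ℕ → ℝ := fun j => (((n - j).choose (k - j) : ℕ) : ℝ) with hNc_def
    have hNpos : ∀ j, j ≤ k → (0:ℝ) < Nc j := by
      intro j hj
      have h := Nat.choose_pos (show k - j ≤ n - j by omega)
      simp only [hNc_def]
      exact_mod_cast h
    have hNnn : ∀ j, (0:ℝ) ≤ Nc j := fun j => Nat.cast_nonneg _
    have hNstep : ∀ j, j < k → ((n:ℝ) - j) * Nc (j+1) = ((k:ℝ) - j) * Nc j := by
      intro j hj
      have hid : (n - j) * ((n - (j+1)).choose (k - (j+1))) = ((n - j).choose (k - j)) * (k - j) := by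
        have h1 : n - j = (n - j - 1) + 1 := by omega
        have h2 : k - j = (k - j - 1) + 1 := by omega
        have := Nat.add_one_mul_choose_eq (n - j - 1) (k - j - 1)
        have h3 : n - (j+1) = n - j - 1 := by omega
        have h4 : k - (j+1) = k - j - 1 := by omega
        rw [h3, h4, h1, h2]
        exact_mod_cast this
      have hcast : ((n:ℝ) - j) = ((n - j : ℕ) : ℝ) := by
        rw [Nat.cast_sub (by omega)]
      have hcast2 : ((k:ℝ) - j) = ((k - j : ℕ) : ℝ) := by
        rw [Nat.cast_sub (by omega)]
      rw [hcast, hcast2]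
      simp only [hNc_def]
      exact_mod_cast hid.trans (Nat.mul_comm _ _)
    have hup : ∀ j, j + 1 ≤ 2*d → Nc (j+1) ≤ 2 * p * Nc j := by
      intro j hj
      have hjk : j < k := by omega
      have hnj : (0:ℝ) < (n:ℝ) - j := by
        have : (j:ℝ) < k := by exact_mod_cast hjk
        linarith
      have heq := hNstep j hjk
      have hjR : (0:ℝ) ≤ (j:ℝ) := Nat.cast_nonneg j
      -- (k - j) ≤ 2p (n - j), i.e. n(k-j) ≤ 2k(n-j)
      have hineq : ((k:ℝ) - j) ≤ 2 * p * ((n:ℝ) - j) := by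
        have hpj : 2 * p * (j:ℝ) ≤ (j:ℝ) := by nlinarith
        have hpn : (0:ℝ) ≤ p * n := by positivity
        nlinarith [hkp]
      have := hNnn j
      nlinarith [hNnn (j+1)]
    have hE1 : ∀ i, d + i ≤ 2*d → Nc (d+i) ≤ (2*p)^i * Nc d := by
      intro i
      induction i with
      | zero => intro _; simp
      | succ i ih =>
        intro hi
        have h1 := ih (by omega)
        have h2 := hup (d+i) (by omega)
        have h2p : (0:ℝ) ≤ 2*p := by linarith
        calc Nc (d+(i+1)) = Nc ((d+i)+1) := by ring_nf
          _ ≤ 2*p * Nc (d+i) := h2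
          _ ≤ 2*p * ((2*p)^i * Nc d) := by nlinarith
          _ = (2*p)^(i+1) * Nc d := by ring
    have hdown : ∀ j, j + 1 ≤ d → Nc j ≤ (2/p) * Nc (j+1) := by
      intro j hj
      have hjk : j < k := by omega
      have hnj : (0:ℝ) < (n:ℝ) - j := by
        have : (j:ℝ) < k := by exact_mod_cast hjk
        linarith
      have hkj : (0:ℝ) < (k:ℝ) - j := by
        have : (j:ℝ) < k := by exact_mod_cast hjk
        linarith
      have heq := hNstep j hjk
      -- n - j ≤ (2/p)(k - j) i.e. k(n-j) ≤ 2n(k-j), using 2j ≤ k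
      have h2j : 2 * (j:ℝ) ≤ k := by
        have : 2 * j ≤ k := by omega
        exact_mod_cast this
      have hineq : ((n:ℝ) - j) ≤ (2/p) * ((k:ℝ) - j) := by
        have hjR : (0:ℝ) ≤ (j:ℝ) := Nat.cast_nonneg j
        have hkey : p * ((n:ℝ) - j) ≤ 2 * ((k:ℝ) - j) := by
          nlinarith [hkp, mul_nonneg hppos.le hjR]
        rw [div_mul_eq_mul_div, le_div_iff₀ hppos]
        linarith [hkey]
      have h1 : Nc j = (((n:ℝ) - j) * Nc (j+1)) / ((k:ℝ) - j) := by
        rw [heq]; field_simp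
      rw [h1, div_le_iff₀ hkj]
      nlinarith [hNnn (j+1)]
    have hE2 : ∀ i, i ≤ d → Nc (d-i) ≤ (2/p)^i * Nc d := by
      intro i
      induction i with
      | zero => intro _; simp
      | succ i ih =>
        intro hi
        have h1 := ih (by omega)
        have heq : d - i = (d - (i+1)) + 1 := by omega
        have h2 := hdown (d - (i+1)) (by omega)
        rw [← heq] at h2
        have h2p : (0:ℝ) ≤ 2/p := by positivity
        calc Nc (d-(i+1)) ≤ (2/p) * Nc (d-i) := h2
          _ ≤ (2/p) * ((2/p)^i * Nc d) := by nlinarith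
          _ = (2/p)^(i+1) * Nc d := by ring
    have hXcard : ∀ T : Finset (Fin n), T.card ≤ k →
        ((((ksets n k).filter (fun S => T ⊆ S)).card : ℕ) : ℝ) = Nc T.card := by
      intro T hT
      rw [card_filter_superset n k T hT]
    have hdk : d ≤ k := by omega
    -- modified Y defined everywhere
    set Y' : Finset (Fin n) → Finset (Finset (Fin n)) :=
      fun A => if A ∈ F then Y A else ∅ with hY'_def
    have hY'F : ∀ A ∈ F, Y' A = Y A := by
      intro A hA; simp only [hY'_def, if_pos hA]
    set w : Finset (Fin n) → Finset (Fin n) → ℝ :=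
      fun A B => ((((ksets n k).filter (fun S => (A ∪ B) ⊆ S)).card : ℕ) : ℝ) with hw_def
    have hw0 : ∀ A B, 0 ≤ w A B := fun A B => Nat.cast_nonneg _
    have hwY : ∀ A B, ((Y' A ∩ Y' B).card : ℝ) ≤ w A B := by
      intro A B
      by_cases hA : A ∈ F
      · by_cases hB : B ∈ F
        · have hsub : Y' A ∩ Y' B ⊆ (ksets n k).filter (fun S => (A ∪ B) ⊆ S) := by
            intro S hS
            rw [Finset.mem_inter] at hS
            rw [hY'F A hA] at hS
            rw [hY'F B hB] at hS
            have h1 := hYsub A hA hS.1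
            have h2 := hYsub B hB hS.2
            rw [Finset.mem_filter] at h1 h2 ⊢
            exact ⟨h1.1, Finset.union_subset h1.2 h2.2⟩
          simp only [hw_def]
          exact_mod_cast Finset.card_le_card hsub
        · simp only [hY'_def, if_neg hB, Finset.inter_empty, Finset.card_empty,
            Nat.cast_zero]
          exact hw0 A B
      · simp only [hY'_def, if_neg hA, Finset.empty_inter, Finset.card_empty, Nat.cast_zero]
        exact hw0 A B
    set θ : ℝ := c/4 * Nc d with hθ_def
    have hθ0 : 0 ≤ θ := by
      have := hNnn d
      simp only [hθ_def]
      positivity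
    set g : List (Finset (Fin n)) := greedy w θ F.toList with hg_def
    have hgsub : g.Sublist F.toList := greedy_sublist w θ F.toList
    have hgF : ∀ A ∈ g, A ∈ F := by
      intro A hA
      exact Finset.mem_toList.mp (hgsub.subset hA)
    have hgnd : g.Nodup := hgsub.nodup F.nodup_toList
    have hggood : GoodL w θ g := greedy_good w θ F.toList
    -- each Y' A for A in F has card at least c * Nc d
    have hYA_card : ∀ A ∈ F, c * Nc d ≤ ((Y' A).card : ℝ) := by
      intro A hA
      rw [hY'F A hA]
      have := hYdense A hA
      rw [hXcard A (by rw [hF A hA]; exact hdk)] at this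
      rw [hF A hA] at this
      exact this
    -- covering lower bound for sublists of g
    have cover : ∀ l' : List (Finset (Fin n)), l'.Sublist g →
        (3*c/4) * Nc d * l'.length ≤ ((lUnion Y' l').card : ℝ) := by
      intro l' hsub
      have hbon := bonferroni hwY l'
      have hps := good_pairSum_le hw0 hθ0 hggood hsub
      have hsum : c * Nc d * l'.length ≤ (l'.map (fun A => ((Y' A).card : ℝ))).sum := by
        apply mul_length_le_sum
        intro A hAl
        exact hYA_card A (hgF A (hsub.subset hAl))
      simp only [hθ_def] at hps
      linarith
    -- the full Y-union set
    set Wf : Finset (Finset (Fin n)) := (ksets n k).filter (fun S => ∃ A ∈ F, S ∈ Y A)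
      with hWf_def
    have hWsub : ∀ l' : List (Finset (Fin n)), l'.Sublist g → lUnion Y' l' ⊆ Wf := by
      intro l' hsub S hS
      rw [mem_lUnion] at hS
      obtain ⟨A, hAl, hSA⟩ := hS
      have hAF : A ∈ F := hgF A (hsub.subset hAl)
      rw [hY'F A hAF] at hSA
      have := hYsub A hAF hSA
      rw [Finset.mem_filter] at this
      rw [hWf_def, Finset.mem_filter]
      exact ⟨this.1, A, hAF, hSA⟩
    have hWlen : ∀ l' : List (Finset (Fin n)), l'.Sublist g →
        (3*c/4) * Nc d * l'.length ≤ ((Wf.card : ℕ) : ℝ) := by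
      intro l' hsub
      calc (3*c/4) * Nc d * l'.length ≤ ((lUnion Y' l').card : ℝ) := cover l' hsub
        _ ≤ _ := by exact_mod_cast Finset.card_le_card (hWsub l' hsub)
    have hWnn : (0:ℝ) ≤ ((Wf.card : ℕ) : ℝ) := Nat.cast_nonneg _
    -- bound for the selected part
    set Sel : Finset (Finset (Fin n)) := (ksets n k).filter (fun S => ∃ A ∈ g, A ⊆ S)
      with hSel_def
    have hSelbound : ((Sel.card : ℕ) : ℝ) ≤ (4/(3*c)) * ((Wf.card : ℕ) : ℝ) := by
      have hsub : Sel ⊆ lUnion (fun A => (ksets n k).filter (fun S => A ⊆ S)) g := by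
        intro S hS
        rw [hSel_def, Finset.mem_filter] at hS
        obtain ⟨hSk, A, hAg, hAS⟩ := hS
        rw [mem_lUnion]
        exact ⟨A, hAg, Finset.mem_filter.mpr ⟨hSk, hAS⟩⟩
      have h1 : ((Sel.card : ℕ) : ℝ)
          ≤ ((lUnion (fun A => (ksets n k).filter (fun S => A ⊆ S)) g).card : ℝ) := by
        exact_mod_cast Finset.card_le_card hsub
      have h2 := card_lUnion_le (fun A => (ksets n k).filter (fun S => A ⊆ S)) g
      have h3 : (((g.map (fun A => ((ksets n k).filter (fun S => A ⊆ S)).card)).sum : ℕ) : ℝ)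
          = (g.map (fun A => (((ksets n k).filter (fun S => A ⊆ S)).card : ℝ))).sum := by
        rw [Nat.cast_list_sum, List.map_map]
        rfl
      have h4 : (g.map (fun A => (((ksets n k).filter (fun S => A ⊆ S)).card : ℝ))).sum
          ≤ Nc d * g.length := by
        apply sum_le_mul_length
        intro A hAg
        rw [hXcard A (by rw [hF A (hgF A hAg)]; exact hdk), hF A (hgF A hAg)]
      have h5 := hWlen g (List.Sublist.refl g)
      have h2' : ((lUnion (fun A => (ksets n k).filter (fun S => A ⊆ S)) g).card : ℝ)
          ≤ (((g.map (fun A => ((ksets n k).filter (fun S => A ⊆ S)).card)).sum : ℕ) : ℝ) := by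
        exact_mod_cast h2
      have hgl : (0:ℝ) ≤ (g.length : ℝ) := Nat.cast_nonneg _
      rw [h3] at h2'
      have hfin : ((Sel.card : ℕ) : ℝ) ≤ Nc d * g.length := by linarith
      calc ((Sel.card : ℕ) : ℝ) ≤ Nc d * g.length := hfin
        _ = (4/(3*c)) * ((3*c/4) * Nc d * g.length) := by field_simp
        _ ≤ (4/(3*c)) * ((Wf.card : ℕ) : ℝ) := by
            apply mul_le_mul_of_nonneg_left h5 (by positivity)
    -- high-degree sets
    set Dt : ℕ → ℝ := fun t => c / (4*(d:ℝ)*((d.choose t):ℝ)*(2*p)^(d-t)) with hDt_def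
    set Ht : ℕ → Finset (Finset (Fin n)) := fun t => (Finset.univ.powersetCard t).filter
      (fun T => Dt t ≤ (((g.toFinset.filter (fun B => T ⊆ B)).card : ℕ) : ℝ)) with hHt_def
    have hreject : ∀ A ∈ F, A ∉ g → ∃ t, t < d ∧ ∃ T ∈ Ht t, T ⊆ A := by
      intro A hA hnag
      have hrej : θ < (g.map (w A)).sum :=
        greedy_reject hw0 θ F.toList A (Finset.mem_toList.mpr hA) hnag
      have hsumeq : g.toFinset.sum (w A) = (g.map (w A)).sum := List.sum_toFinset (w A) hgnd
      have hAd : A.card = d := hF A hA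
      have hmap : ∀ b ∈ g.toFinset, (A ∩ b).card ∈ Finset.range d := by
        intro b hb
        have hbg : b ∈ g := List.mem_toFinset.mp hb
        have hbF : b ∈ F := hgF b hbg
        have hle : (A ∩ b).card ≤ d := by
          calc (A ∩ b).card ≤ A.card := Finset.card_le_card Finset.inter_subset_left
            _ = d := hAd
        rw [Finset.mem_range]
        rcases lt_or_eq_of_le hle with h | h
        · exact h
        · exfalso
          have h1 : A ∩ b = A :=
            Finset.eq_of_subset_of_card_le Finset.inter_subset_left (by omega)
          have h2 : A ⊆ b := by rw [← h1]; exact Finset.inter_subset_right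
          have h3 : A = b := Finset.eq_of_subset_of_card_le h2
            (by rw [hAd, hF b hbF])
          exact hnag (h3 ▸ hbg)
      have hfib := Finset.sum_fiberwise_of_maps_to hmap (w A)
      have hex : ∃ t ∈ Finset.range d, θ/d <
          ∑ b ∈ g.toFinset.filter (fun b => (A ∩ b).card = t), w A b := by
        by_contra hcon
        push_neg at hcon
        have hle : ∑ t ∈ Finset.range d,
            (∑ b ∈ g.toFinset.filter (fun b => (A ∩ b).card = t), w A b)
            ≤ (Finset.range d).card • (θ/d) :=
          Finset.sum_le_card_nsmul _ _ _ (fun t ht => hcon t ht)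
        rw [Finset.card_range, nsmul_eq_mul] at hle
        have hdR : ((d:ℝ)) ≠ 0 := by positivity
        rw [mul_div_cancel₀ θ hdR] at hle
        rw [hfib, hsumeq] at hle
        linarith
      obtain ⟨t, htr, hinner⟩ := hex
      have htd : t < d := Finset.mem_range.mp htr
      set fib : Finset (Finset (Fin n)) := g.toFinset.filter (fun b => (A ∩ b).card = t)
        with hfib_def
      -- each w A b in the fiber is at most (2p)^(d-t) * Nc d
      have hwb : ∀ b ∈ fib, w A b ≤ (2*p)^(d-t) * Nc d := by
        intro b hb
        rw [hfib_def, Finset.mem_filter] at hb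
        have hbF : b ∈ F := hgF b (List.mem_toFinset.mp hb.1)
        have hbd : b.card = d := hF b hbF
        have hcu : (A ∪ b).card = d + (d - t) := by
          have := Finset.card_union_add_card_inter A b
          rw [hAd, hbd, hb.2] at this
          omega
        have hcule : (A ∪ b).card ≤ k := by omega
        have : w A b = Nc (d + (d-t)) := by
          simp only [hw_def]
          rw [hXcard (A ∪ b) hcule, hcu]
        rw [this]
        exact hE1 (d-t) (by omega)
      have hinle : ∑ b ∈ fib, w A b ≤ (fib.card : ℝ) * ((2*p)^(d-t) * Nc d) := by
        have := Finset.sum_le_card_nsmul fib (w A) ((2*p)^(d-t) * Nc d) hwb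
        rwa [nsmul_eq_mul] at this
      have hNd : 0 < Nc d := hNpos d hdk
      have hP2 : (0:ℝ) < (2*p)^(d-t) := by positivity
      have hdRpos : (0:ℝ) < d := by exact_mod_cast hd0
      -- fib.card > c / (4 d (2p)^(d-t))
      have hfibcard : c / (4*(d:ℝ)*(2*p)^(d-t)) < (fib.card : ℝ) := by
        rw [div_lt_iff₀ (by positivity)]
        have h1 : θ/d < (fib.card : ℝ) * ((2*p)^(d-t) * Nc d) := lt_of_lt_of_le hinner hinle
        simp only [hθ_def] at h1
        rw [div_lt_iff₀ hdRpos] at h1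
        have h2 : c/4 * Nc d < (fib.card : ℝ) * ((2*p)^(d-t) * Nc d) * d := h1
        nlinarith
      -- second pigeonhole over t-subsets of A
      have hmap2 : ∀ b ∈ fib, A ∩ b ∈ A.powersetCard t := by
        intro b hb
        rw [hfib_def, Finset.mem_filter] at hb
        rw [Finset.mem_powersetCard]
        exact ⟨Finset.inter_subset_left, hb.2⟩
      have hfib2 := Finset.card_eq_sum_card_fiberwise hmap2
      have hchoose : (A.powersetCard t).card = d.choose t := by
        rw [Finset.card_powersetCard, hAd]
      have hchoosepos : 0 < d.choose t := Nat.choose_pos htd.le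
      have hchR : (0:ℝ) < (d.choose t : ℝ) := by exact_mod_cast hchoosepos
      have hne2 : (A.powersetCard t).Nonempty := by
        rw [Finset.powersetCard_nonempty, hAd]
        exact htd.le
      have hex2 : ∃ T ∈ A.powersetCard t,
          (fib.card : ℝ) / (d.choose t : ℝ)
            ≤ ((fib.filter (fun b => A ∩ b = T)).card : ℝ) := by
        apply Finset.exists_le_of_sum_le hne2
        have hsc : ∑ _T ∈ A.powersetCard t, (fib.card : ℝ) / (d.choose t : ℝ)
            = (fib.card : ℝ) := by
          rw [Finset.sum_const, hchoose, nsmul_eq_mul]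
          rw [mul_comm]; exact div_mul_cancel₀ _ hchR.ne'
        rw [hsc]
        have : ((fib.card : ℕ) : ℝ)
            = ∑ T ∈ A.powersetCard t, (((fib.filter (fun b => A ∩ b = T)).card : ℕ) : ℝ) := by
          exact_mod_cast congrArg (Nat.cast : ℕ → ℝ) hfib2
        rw [← this]
      obtain ⟨T, hTA, hTcard⟩ := hex2
      refine ⟨t, htd, T, ?_, ?_⟩
      · rw [hHt_def]
        simp only [Finset.mem_filter]
        constructor
        · rw [Finset.mem_powersetCard]
          refine ⟨Finset.subset_univ T, ?_⟩
          exact (Finset.mem_powersetCard.mp hTA).2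
        · -- Dt t ≤ degree of T in g
          have hsub3 : fib.filter (fun b => A ∩ b = T) ⊆ g.toFinset.filter (fun B => T ⊆ B) := by
            intro b hb
            rw [Finset.mem_filter] at hb
            have hb1 := hb.1
            rw [hfib_def, Finset.mem_filter] at hb1
            rw [Finset.mem_filter]
            exact ⟨hb1.1, hb.2 ▸ Finset.inter_subset_right⟩
          have hdeg : ((fib.filter (fun b => A ∩ b = T)).card : ℝ)
              ≤ (((g.toFinset.filter (fun B => T ⊆ B)).card : ℕ) : ℝ) := by
            exact_mod_cast Finset.card_le_card hsub3
          have hDtle : Dt t ≤ (fib.card : ℝ) / (d.choose t : ℝ) := by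
            simp only [hDt_def]
            rw [div_le_div_iff₀ (by positivity) hchR]
            have h6 : c / (4*(d:ℝ)*(2*p)^(d-t)) < (fib.card : ℝ) := hfibcard
            rw [div_lt_iff₀ (by positivity)] at h6
            nlinarith
          linarith
      · exact (Finset.mem_powersetCard.mp hTA).1
    -- the Y-assignment for level t hypergraphs
    set Y'' : Finset (Fin n) → Finset (Finset (Fin n)) :=
      fun T => lUnion Y' (g.filter (fun B => decide (T ⊆ B))) with hY''_def
    have hY''W : ∀ T, Y'' T ⊆ Wf := by
      intro T S hS
      simp only [hY''_def] at hS
      rw [mem_lUnion] at hS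
      obtain ⟨B, hBl, hSB⟩ := hS
      have hBg : B ∈ g := (List.filter_sublist (l := g)).subset hBl
      have hBF : B ∈ F := hgF B hBg
      rw [hY'F B hBF] at hSB
      have := hYsub B hBF hSB
      rw [Finset.mem_filter] at this
      rw [hWf_def, Finset.mem_filter]
      exact ⟨this.1, B, hBF, hSB⟩
    -- cardinality bound for each level t part, via the induction hypothesis
    have hPart : ∀ t (ht : t < d),
        ((((ksets n k).filter (fun S => ∃ T ∈ Ht t, T ⊆ S)).card : ℕ) : ℝ)
          ≤ Ktot t * ((Wf.card : ℕ) : ℝ) := by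
      intro t ht
      have htk : 2 * t ≤ k := by omega
      have hpt : (k:ℝ)/(n:ℝ) ≤ pf t ht := by
        have h1 : p₀ ≤ ptot t := le_trans (min_le_right _ _)
          (Finset.min'_le _ _ (Finset.mem_image_of_mem ptot (Finset.mem_range.mpr ht)))
        have h2 : ptot t = pf t ht := by simp only [hptot_def]; rw [dif_pos ht]
        calc (k:ℝ)/(n:ℝ) ≤ p₀ := hpp
          _ ≤ ptot t := h1
          _ = pf t ht := h2
      have hHcard : ∀ T ∈ Ht t, T.card = t := by
        intro T hT
        rw [hHt_def] at hT
        simp only [Finset.mem_filter] at hT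
        exact (Finset.mem_powersetCard.mp hT.1).2
      have hcovsub : ∀ T ∈ Ht t, Y'' T ⊆ (ksets n k).filter (fun S => T ⊆ S) := by
        intro T hT S hS
        simp only [hY''_def] at hS
        rw [mem_lUnion] at hS
        obtain ⟨B, hBl, hSB⟩ := hS
        have hTB : T ⊆ B := by
          have := List.of_mem_filter hBl
          simpa using this
        have hBg : B ∈ g := (List.filter_sublist (l := g)).subset hBl
        have hBF : B ∈ F := hgF B hBg
        rw [hY'F B hBF] at hSB
        have h1 := hYsub B hBF hSB
        rw [Finset.mem_filter] at h1 ⊢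
        exact ⟨h1.1, hTB.trans h1.2⟩
      have hcovdense : ∀ T ∈ Ht t,
          cstar * ((((ksets n k).filter (fun S => T ⊆ S)).card : ℕ) : ℝ)
            ≤ (((Y'' T).card : ℕ) : ℝ) := by
        intro T hT
        have hTt : T.card = t := hHcard T hT
        have htk' : T.card ≤ k := by omega
        rw [hXcard T htk', hTt]
        set lT : List (Finset (Fin n)) := g.filter (fun B => decide (T ⊆ B)) with hlT_def
        have hlsub : lT.Sublist g := List.filter_sublist
        have hlen : (lT.length : ℝ)
            = (((g.toFinset.filter (fun B => T ⊆ B)).card : ℕ) : ℝ) := by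
          have h1 : lT.toFinset = g.toFinset.filter (fun B => T ⊆ B) := by
            rw [hlT_def, List.toFinset_filter]
            apply Finset.filter_congr
            intro B _
            simp
          have h2 : lT.toFinset.card = lT.length :=
            List.toFinset_card_of_nodup (hlsub.nodup hgnd)
          rw [← h1, h2]
        have hdeg : Dt t ≤ (lT.length : ℝ) := by
          rw [hlen]
          rw [hHt_def] at hT
          simp only [Finset.mem_filter] at hT
          exact hT.2
        have hcov := cover lT hlsub
        -- numeric chain
        have hNd : 0 < Nc d := hNpos d hdk
        have he : d - (d - t) = t := by omega
        have hE2' : Nc t ≤ (2/p)^(d-t) * Nc d := by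
          have := hE2 (d-t) (by omega)
          rwa [he] at this
        have hP2 : (0:ℝ) < (2*p)^(d-t) := by positivity
        have hQ2 : (0:ℝ) < (2/p)^(d-t) := by positivity
        have hch : (0:ℝ) < ((d.choose t : ℕ) : ℝ) := by
          exact_mod_cast Nat.choose_pos ht.le
        have hkey : cstar * (2/p)^(d-t) ≤ (3*c/4) * Dt t := by
          have hmul : (2/p)^(d-t) * (2*p)^(d-t) = 4^(d-t) := by
            rw [← mul_pow]
            congr 1
            field_simp
            ring
          have hchle : ((d.choose t : ℕ) : ℝ) ≤ 2^d := by
            have h1 : d.choose t ≤ 2^d := by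
              have hs : d.choose t ≤ ∑ i ∈ Finset.range (d+1), d.choose i :=
                Finset.single_le_sum (f := fun i => d.choose i) (fun i _ => Nat.zero_le _)
                  (Finset.mem_range.mpr (show t < d + 1 by omega))
              rw [Nat.sum_range_choose d] at hs
              exact hs
            exact_mod_cast h1
          have h4e : (4:ℝ)^(d-t) ≤ 4^d := by
            apply pow_le_pow_right₀ (by norm_num) (by omega)
          have h8 : (4:ℝ)^d * 2^d = 8^d := by
            rw [← mul_pow]; norm_num
          have hdR : (0:ℝ) < (d:ℝ) := by exact_mod_cast hd0
          have hstep1 : (4:ℝ)^(d-t) * ((d.choose t : ℕ) : ℝ) ≤ 8^d := by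
            calc (4:ℝ)^(d-t) * ((d.choose t : ℕ) : ℝ) ≤ 4^d * 2^d :=
                  mul_le_mul h4e hchle (le_of_lt hch) (by positivity)
              _ = 8^d := h8
          have hfinal : cstar * 4^(d-t) ≤ 3*c^2/(16*(d:ℝ)*((d.choose t : ℕ) : ℝ)) := by
            rw [hcstar_def, div_mul_eq_mul_div, div_le_div_iff₀ (by positivity) (by positivity)]
            nlinarith [mul_le_mul_of_nonneg_left hstep1
              (show (0:ℝ) ≤ 16*(d:ℝ)*c^2 by positivity),
              show (0:ℝ) ≤ (d:ℝ)*c^2*8^d by positivity]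
          have h1 : (3*c/4) * Dt t
              = (3*c^2/(16*(d:ℝ)*((d.choose t : ℕ) : ℝ))) / (2*p)^(d-t) := by
            simp only [hDt_def]
            field_simp
            ring
          have h2 : cstar * (2/p)^(d-t) = (cstar * 4^(d-t)) / (2*p)^(d-t) := by
            rw [eq_div_iff (ne_of_gt hP2), mul_assoc, hmul]
          rw [h1, h2]
          exact (div_le_div_iff_of_pos_right hP2).mpr hfinal
        calc cstar * Nc t ≤ cstar * ((2/p)^(d-t) * Nc d) := by nlinarith
          _ = cstar * (2/p)^(d-t) * Nc d := by ring
          _ ≤ (3*c/4) * Dt t * Nc d := by nlinarith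
          _ = (3*c/4) * Nc d * Dt t := by ring
          _ ≤ (3*c/4) * Nc d * lT.length := by
              apply mul_le_mul_of_nonneg_left hdeg
              positivity
          _ ≤ ((lUnion Y' lT).card : ℝ) := hcov
          _ = (((Y'' T).card : ℕ) : ℝ) := by simp only [hY''_def, hlT_def]
      have hIH := hmf t ht n k htk hkn hpt (Ht t) hHcard Y'' hcovsub hcovdense
      have hYW : (ksets n k).filter (fun S => ∃ T ∈ Ht t, S ∈ Y'' T) ⊆ Wf := by
        intro S hS
        rw [Finset.mem_filter] at hS
        obtain ⟨_, T, _, hST⟩ := hS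
        exact hY''W T hST
      have hKt : Ktot t = Kf t ht := by simp only [hKtot_def]; rw [dif_pos ht]
      rw [hKt]
      calc ((((ksets n k).filter (fun S => ∃ T ∈ Ht t, T ⊆ S)).card : ℕ) : ℝ)
          ≤ Kf t ht * ((((ksets n k).filter (fun S => ∃ T ∈ Ht t, S ∈ Y'' T)).card : ℕ) : ℝ) := hIH
        _ ≤ Kf t ht * ((Wf.card : ℕ) : ℝ) := by
            apply mul_le_mul_of_nonneg_left _ (hKf t ht)
            exact_mod_cast Finset.card_le_card hYW
    -- decomposition of the bad event
    have hdecomp : (ksets n k).filter (fun S => ∃ A ∈ F, A ⊆ S)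
        ⊆ Sel ∪ (Finset.range d).biUnion
            (fun t => (ksets n k).filter (fun S => ∃ T ∈ Ht t, T ⊆ S)) := by
      intro S hS
      rw [Finset.mem_filter] at hS
      obtain ⟨hSk, A, hAF, hAS⟩ := hS
      by_cases hAg : A ∈ g
      · apply Finset.mem_union_left
        rw [hSel_def, Finset.mem_filter]
        exact ⟨hSk, A, hAg, hAS⟩
      · obtain ⟨t, htd', T, hTH, hTA⟩ := hreject A hAF hAg
        apply Finset.mem_union_right
        rw [Finset.mem_biUnion]
        refine ⟨t, Finset.mem_range.mpr htd', ?_⟩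
        rw [Finset.mem_filter]
        exact ⟨hSk, T, hTH, hTA.trans hAS⟩
    have hcard1 : ((((ksets n k).filter (fun S => ∃ A ∈ F, A ⊆ S)).card : ℕ) : ℝ)
        ≤ ((Sel.card : ℕ) : ℝ) + ∑ t ∈ Finset.range d,
            ((((ksets n k).filter (fun S => ∃ T ∈ Ht t, T ⊆ S)).card : ℕ) : ℝ) := by
      have h1 := Finset.card_le_card hdecomp
      have h2 := Finset.card_union_le Sel ((Finset.range d).biUnion
        (fun t => (ksets n k).filter (fun S => ∃ T ∈ Ht t, T ⊆ S)))
      have h3 := Finset.card_biUnion_le (s := Finset.range d)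
        (t := fun t => (ksets n k).filter (fun S => ∃ T ∈ Ht t, T ⊆ S))
      have h4 : ((ksets n k).filter (fun S => ∃ A ∈ F, A ⊆ S)).card
          ≤ Sel.card + ∑ t ∈ Finset.range d,
              ((ksets n k).filter (fun S => ∃ T ∈ Ht t, T ⊆ S)).card := by omega
      push_cast
      exact_mod_cast h4
    have hsumpart : ∑ t ∈ Finset.range d,
        ((((ksets n k).filter (fun S => ∃ T ∈ Ht t, T ⊆ S)).card : ℕ) : ℝ)
        ≤ (∑ t ∈ Finset.range d, Ktot t) * ((Wf.card : ℕ) : ℝ) := by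
      rw [Finset.sum_mul]
      apply Finset.sum_le_sum
      intro t ht
      exact hPart t (Finset.mem_range.mp ht)
    calc ((((ksets n k).filter (fun S => ∃ A ∈ F, A ⊆ S)).card : ℕ) : ℝ)
        ≤ ((Sel.card : ℕ) : ℝ) + ∑ t ∈ Finset.range d,
            ((((ksets n k).filter (fun S => ∃ T ∈ Ht t, T ⊆ S)).card : ℕ) : ℝ) := hcard1
      _ ≤ (4/(3*c)) * ((Wf.card : ℕ) : ℝ)
          + (∑ t ∈ Finset.range d, Ktot t) * ((Wf.card : ℕ) : ℝ) := by
          apply add_le_add hSelbound hsumpart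
      _ = K * ((Wf.card : ℕ) : ℝ) := by rw [hK_def]; ring

theorem stmt11 :
    ∀ (d : ℕ), 1 ≤ d → ∀ c : ℝ, 0 < c →
      ∃ p₀ : ℝ, 0 < p₀ ∧ ∃ K : ℝ,
        ∀ (n k : ℕ), 2 * d ≤ k → k ≤ n → (k : ℝ) / (n : ℝ) ≤ p₀ →
          ∀ (F : Finset (Finset (Fin n))), (∀ A ∈ F, A.card = d) →
            ∀ Y : Finset (Fin n) → Finset (Finset (Fin n)),
              (∀ A ∈ F, Y A ⊆ (ksets n k).filter (fun S => A ⊆ S)) →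
              (∀ A ∈ F, c * (((ksets n k).filter (fun S => A ⊆ S)).card : ℝ) ≤
                ((Y A).card : ℝ)) →
              (((ksets n k).filter (fun S => ∃ A ∈ F, A ⊆ S)).card : ℝ) ≤
                K * (((ksets n k).filter (fun S => ∃ A ∈ F, S ∈ Y A)).card : ℝ) := by
  intro d _ c hc
  obtain ⟨p₀, K, hp₀, _, h⟩ := pruning d c hc
  exact ⟨p₀, hp₀, K, h⟩
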